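/- Let μ and ν be probability measures and f a measurable function that is σ-sub-Gaussian (under all relevant distributions). Then for α ∈ (0,1) the mismatch term satisfies |E_ν[f] − E_μ[f]| ≤ √(2σ²·JS_α(ν‖μ)/(α(1−α))), and combining with the matched generalization bound: |gen(P_{W|S}, μ, ν)| ≤ √(2σ²·JS_α(ν‖μ)/(α(1−α))) + (1/n)Σᵢ √(2σ²·I_JS^α(W;Zᵢ)/(α(1−α))). -/

import Mathlib

open MeasureTheory Real

/-- Kullback-Leibler divergence between two distributions given by densities `p`, `q`
with respect to a common dominating measure `ν`. -/
noncomputable def KLd {X : Type*} [MeasurableSpace X] (ν : Measure X) (p q : X → ℝ) : ℝ :=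
  ∫ x, p x * Real.log (p x / q x) ∂ν

/-- `f` is `σ`-sub-Gaussian under the distribution with density `p` w.r.t. `ν`:
`log E[e^{λ(f − E f)}] ≤ λ²σ²/2` for all `λ ∈ ℝ` (including finiteness of the
exponential moments). -/
def SubGaussian {X : Type*} [MeasurableSpace X] (ν : Measure X) (p : X → ℝ) (f : X → ℝ)
    (σ : ℝ) : Prop :=
  (∀ l : ℝ,
    Integrable (fun x => Real.exp (l * (f x - ∫ y, f y * p y ∂ν)) * p x) ν) ∧
  ∀ l : ℝ,
    Real.log (∫ x, Real.exp (l * (f x - ∫ y, f y * p y ∂ν)) * p x ∂ν)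
      ≤ l ^ 2 * σ ^ 2 / 2

/-- Training distribution `μ` (density `μd`), test distribution `ν` (density `νd`), loss
`ℓ` σ-sub-Gaussian under all relevant distributions, `α ∈ (0,1)`. Then the mismatch term
satisfies `|E_ν[f] − E_μ[f]| ≤ √(2σ²·JS_α(ν‖μ)/(α(1−α)))`, and the mismatched expected
generalization error `gen(P_{W|S},μ,ν) = (1/n)Σᵢ (E_{P_W⊗ν}[ℓ(W,Zᵢ)] − E_{P_{W,Zᵢ}}[ℓ])`
satisfies
`|gen| ≤ √(2σ²·JS_α(ν‖μ)/(α(1−α))) + (1/n)Σᵢ √(2σ²·I_JS^α(W;Zᵢ)/(α(1−α)))`. -/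
lemma integ_one {X : Type*} [MeasurableSpace X] {ν : Measure X} {f : X → ℝ}
    (h : ∫ x, f x ∂ν = 1) : Integrable f ν := by
  by_contra hc
  rw [MeasureTheory.integral_undef hc] at h
  exact one_ne_zero h.symm

lemma gibbs {X : Type*} [MeasurableSpace X] {ν : Measure X} {p q g : X → ℝ}
    (hp0 : ∀ x, 0 ≤ p x) (hq0 : ∀ x, 0 ≤ q x)
    (hp1 : ∫ x, p x ∂ν = 1) (hq1 : ∫ x, q x ∂ν = 1)
    (hpq : ∀ x, p x = 0 → q x = 0)
    (hgq : Integrable (fun x => g x * q x) ν)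
    (hgp : Integrable (fun x => Real.exp (g x) * p x) ν)
    (hKL : Integrable (fun x => q x * Real.log (q x / p x)) ν) :
    ∫ x, g x * q x ∂ν ≤ (∫ x, q x * Real.log (q x / p x) ∂ν)
      + Real.log (∫ x, Real.exp (g x) * p x ∂ν) := by
  have hqInt : Integrable q ν := integ_one hq1
  set Z := ∫ x, Real.exp (g x) * p x ∂ν with hZdef
  have hZ0 : 0 < Z := by
    rcases lt_or_eq_of_le (integral_nonneg (f := fun x => Real.exp (g x) * p x) (fun x => mul_nonneg (Real.exp_pos _).le (hp0 x))) with h | h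
    · exact h
    · exfalso
      have hz : (fun x => Real.exp (g x) * p x) =ᵐ[ν] 0 :=
        (integral_eq_zero_iff_of_nonneg (fun x => mul_nonneg (Real.exp_pos _).le (hp0 x)) hgp).mp h.symm
      have hpz : p =ᵐ[ν] 0 := by
        filter_upwards [hz] with x hx
        have := (Real.exp_pos (g x)).ne'
        simpa [this] using hx
      rw [integral_congr_ae hpz] at hp1
      simp at hp1
  -- pointwise inequality
  have hpt : ∀ x, g x * q x - q x * Real.log Z - q x * Real.log (q x / p x)
      ≤ Real.exp (g x) * p x / Z - q x := by
    intro x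
    rcases eq_or_lt_of_le (hq0 x) with hq | hq
    · rw [← hq]
      have : 0 ≤ Real.exp (g x) * p x / Z := div_nonneg (mul_nonneg (Real.exp_pos _).le (hp0 x)) hZ0.le
      simpa using this
    · have hpx : 0 < p x := by
        rcases eq_or_lt_of_le (hp0 x) with hp | hp
        · exact absurd (hpq x hp.symm) (by linarith)
        · exact hp
      set t := Real.exp (g x) * p x / (Z * q x) with htdef
      have ht0 : 0 < t := by positivity
      have hlogt : Real.log t = g x - Real.log Z - Real.log (q x / p x) := by
        rw [htdef, Real.log_div (mul_pos (Real.exp_pos _) hpx).ne' (mul_pos hZ0 hq).ne',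
          Real.log_mul (Real.exp_ne_zero _) hpx.ne', Real.log_exp,
          Real.log_mul hZ0.ne' hq.ne', Real.log_div hq.ne' hpx.ne']
        ring
      have hle := Real.log_le_sub_one_of_pos ht0
      calc g x * q x - q x * Real.log Z - q x * Real.log (q x / p x)
          = q x * Real.log t := by rw [hlogt]; ring
        _ ≤ q x * (t - 1) := mul_le_mul_of_nonneg_left hle hq.le
        _ = Real.exp (g x) * p x / Z - q x := by
            rw [htdef]; field_simp
  -- integrate
  have hL : Integrable (fun x => g x * q x - q x * Real.log Z - q x * Real.log (q x / p x)) ν :=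
    (hgq.sub (hqInt.mul_const _)).sub hKL
  have hR : Integrable (fun x => Real.exp (g x) * p x / Z - q x) ν :=
    (hgp.div_const Z).sub hqInt
  have hI1 : Integrable (fun x => g x * q x - q x * Real.log Z) ν := hgq.sub (hqInt.mul_const _)
  have hmono := integral_mono hL hR (fun x => hpt x)
  rw [integral_sub hI1 hKL, integral_sub hgq (hqInt.mul_const _),
    integral_sub (hgp.div_const Z) hqInt, integral_mul_const, integral_div, hq1, ← hZdef,
    div_self hZ0.ne'] at hmono
  linarith

lemma dv {X : Type*} [MeasurableSpace X] {ν : Measure X} {p q f : X → ℝ} {σ : ℝ}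
    (hp0 : ∀ x, 0 ≤ p x) (hq0 : ∀ x, 0 ≤ q x)
    (hp1 : ∫ x, p x ∂ν = 1) (hq1 : ∫ x, q x ∂ν = 1)
    (hpq : ∀ x, p x = 0 → q x = 0)
    (hsub : SubGaussian ν p f σ)
    (hfq : Integrable (fun x => f x * q x) ν)
    (hKL : Integrable (fun x => q x * Real.log (q x / p x)) ν) (l : ℝ) :
    l * ((∫ x, f x * q x ∂ν) - (∫ y, f y * p y ∂ν)) ≤ KLd ν q p + l ^ 2 * σ ^ 2 / 2 := by
  have hqInt : Integrable q ν := integ_one hq1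
  set m := ∫ y, f y * p y ∂ν with hm
  have heq : (fun x => (l * (f x - m)) * q x)
      = fun x => l * (f x * q x) - (l * m) * q x := funext fun x => by ring
  have hgq : Integrable (fun x => (l * (f x - m)) * q x) ν := by
    rw [heq]; exact (hfq.const_mul l).sub (hqInt.const_mul (l * m))
  have hg := gibbs hp0 hq0 hp1 hq1 hpq hgq (hsub.1 l) hKL
  have hZ := hsub.2 l
  have hsplit : ∫ x, (l * (f x - m)) * q x ∂ν
      = l * ((∫ x, f x * q x ∂ν) - m) := by
    rw [heq, integral_sub (hfq.const_mul l) (hqInt.const_mul (l * m)),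
      integral_const_mul, integral_const_mul, hq1]
    ring
  rw [hsplit] at hg
  have : KLd ν q p = ∫ x, q x * Real.log (q x / p x) ∂ν := rfl
  linarith

lemma quad {c K s : ℝ} (hs : 0 ≤ s) (h : ∀ l : ℝ, l * c ≤ K + l ^ 2 * s / 2) :
    c ^ 2 ≤ 2 * s * K := by
  have hK : 0 ≤ K := by have := h 0; simpa using this
  rcases eq_or_lt_of_le hs with hs0 | hs0
  · have hc : c = 0 := by
      by_contra hc
      have h1 := h ((K + 1) / c)
      rw [div_mul_cancel₀ _ hc, ← hs0] at h1
      simp at h1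
      linarith
    rw [hc]
    simp
    positivity
  · have h' := h (c / s)
    have e1 : (c / s) * c = c ^ 2 / s := by ring
    have e2 : (c / s) ^ 2 * s / 2 = c ^ 2 / (2 * s) := by
      field_simp
    rw [e1, e2] at h'
    have h2 : c ^ 2 / s * s ≤ (K + c ^ 2 / (2 * s)) * s :=
      mul_le_mul_of_nonneg_right h' hs0.le
    rw [div_mul_cancel₀ _ hs0.ne'] at h2
    have e3 : (K + c ^ 2 / (2 * s)) * s = K * s + c ^ 2 / 2 := by
      field_simp
    rw [e3] at h2
    nlinarith

lemma mismatch {X : Type*} [MeasurableSpace X] {ν : Measure X} {q₁ q₂ f : X → ℝ} {σ α : ℝ}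
    (hσ : 0 ≤ σ) (hα : 0 < α) (hα1 : α < 1)
    (h10 : ∀ x, 0 ≤ q₁ x) (h20 : ∀ x, 0 ≤ q₂ x)
    (h11 : ∫ x, q₁ x ∂ν = 1) (h21 : ∫ x, q₂ x ∂ν = 1)
    (hsub : SubGaussian ν (fun x => α * q₁ x + (1 - α) * q₂ x) f σ)
    (hf1 : Integrable (fun x => f x * q₁ x) ν)
    (hf2 : Integrable (fun x => f x * q₂ x) ν)
    (hKL1 : Integrable (fun x => q₁ x * Real.log (q₁ x / (α * q₁ x + (1 - α) * q₂ x))) ν)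
    (hKL2 : Integrable (fun x => q₂ x * Real.log (q₂ x / (α * q₁ x + (1 - α) * q₂ x))) ν) :
    |(∫ x, f x * q₂ x ∂ν) - ∫ x, f x * q₁ x ∂ν|
      ≤ Real.sqrt (2 * σ ^ 2 *
          (α * KLd ν q₁ (fun x => α * q₁ x + (1 - α) * q₂ x)
            + (1 - α) * KLd ν q₂ (fun x => α * q₁ x + (1 - α) * q₂ x))
          / (α * (1 - α))) := by
  have hα' : (0:ℝ) < 1 - α := by linarith
  set p : X → ℝ := fun x => α * q₁ x + (1 - α) * q₂ x with hpdef
  have hp0 : ∀ x, 0 ≤ p x := fun x =>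
    add_nonneg (mul_nonneg hα.le (h10 x)) (mul_nonneg hα'.le (h20 x))
  have hI1 : Integrable q₁ ν := integ_one h11
  have hI2 : Integrable q₂ ν := integ_one h21
  have hp1 : ∫ x, p x ∂ν = 1 := by
    rw [hpdef]
    rw [integral_add (hI1.const_mul α) (hI2.const_mul (1 - α)),
      integral_const_mul, integral_const_mul, h11, h21]
    ring
  have hpq1 : ∀ x, p x = 0 → q₁ x = 0 := by
    intro x hx
    have h1 := mul_nonneg hα.le (h10 x)
    have h2 := mul_nonneg hα'.le (h20 x)
    have : α * q₁ x = 0 := by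
      simp only [hpdef] at hx; linarith
    rcases mul_eq_zero.mp this with h | h
    · exact absurd h hα.ne'
    · exact h
  have hpq2 : ∀ x, p x = 0 → q₂ x = 0 := by
    intro x hx
    have h1 := mul_nonneg hα.le (h10 x)
    have h2 := mul_nonneg hα'.le (h20 x)
    have : (1 - α) * q₂ x = 0 := by
      simp only [hpdef] at hx; linarith
    rcases mul_eq_zero.mp this with h | h
    · exact absurd h hα'.ne'
    · exact h
  set E₁ := ∫ x, f x * q₁ x ∂ν with hE1
  set E₂ := ∫ x, f x * q₂ x ∂ν with hE2
  have hm : (∫ y, f y * p y ∂ν) = α * E₁ + (1 - α) * E₂ := by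
    have : (fun y => f y * p y) = fun y => α * (f y * q₁ y) + (1 - α) * (f y * q₂ y) :=
      funext fun y => by simp only [hpdef]; ring
    rw [this, integral_add (hf1.const_mul α) (hf2.const_mul (1 - α)),
      integral_const_mul, integral_const_mul]
  have s1 : (E₁ - (α * E₁ + (1 - α) * E₂)) ^ 2
      ≤ 2 * σ ^ 2 * KLd ν q₁ p := by
    refine quad (by positivity) (fun l => ?_)
    have := dv hp0 h10 hp1 h11 hpq1 hsub hf1 hKL1 l
    rw [hm] at this
    exact this
  have s2 : (E₂ - (α * E₁ + (1 - α) * E₂)) ^ 2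
      ≤ 2 * σ ^ 2 * KLd ν q₂ p := by
    refine quad (by positivity) (fun l => ?_)
    have := dv hp0 h20 hp1 h21 hpq2 hsub hf2 hKL2 l
    rw [hm] at this
    exact this
  have key : (E₂ - E₁) ^ 2
      ≤ 2 * σ ^ 2 * (α * KLd ν q₁ p + (1 - α) * KLd ν q₂ p) / (α * (1 - α)) := by
    rw [le_div_iff₀ (by positivity)]
    have t1 := mul_le_mul_of_nonneg_left s1 hα.le
    have t2 := mul_le_mul_of_nonneg_left s2 hα'.le
    nlinarith [t1, t2]
  exact Real.abs_le_sqrt key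

lemma habs' : ∀ t c : ℝ, 0 ≤ c → |t * c| ≤ |Real.exp (1*t)*c + Real.exp ((-1)*t)*c| := by
  intro t c hc
  rw [one_mul, neg_one_mul, abs_mul, abs_of_nonneg hc,
    abs_of_nonneg (add_nonneg (mul_nonneg (Real.exp_pos _).le hc)
      (mul_nonneg (Real.exp_pos _).le hc))]
  have h1 : |t| ≤ Real.exp t + Real.exp (-t) := by
    rcases le_or_gt 0 t with h|h
    · rw [abs_of_nonneg h]; nlinarith [Real.add_one_le_exp t, (Real.exp_pos (-t)).le]
    · rw [abs_of_neg h]; nlinarith [Real.add_one_le_exp (-t), (Real.exp_pos t).le]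
  calc |t| * c ≤ (Real.exp t + Real.exp (-t))*c := mul_le_mul_of_nonneg_right h1 hc
    _ = Real.exp t * c + Real.exp (-t) * c := by ring

/-- key integrability: f·p integrable when f sub-Gaussian under p, p integrable nonneg. -/
lemma int_of_subG {X : Type*} [MeasurableSpace X] {ν : Measure X} {p f : X → ℝ} {σ : ℝ}
    (hsub : SubGaussian ν p f σ) (hpInt : Integrable p ν) (hp0 : ∀ x, 0 ≤ p x)
    (hfm : Measurable f) (hpm : Measurable p) :
    Integrable (fun x => f x * p x) ν := by
  set m := ∫ y, f y * p y ∂ν with hm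
  have he1 := hsub.1 1
  have he2 := hsub.1 (-1)
  have hdiff : Integrable (fun x => (f x - m) * p x) ν := by
    refine Integrable.mono (he1.add he2)
      (((hfm.sub measurable_const).mul hpm).aestronglyMeasurable) ?_
    filter_upwards with x
    show ‖(f x - m) * p x‖ ≤ ‖Real.exp (1*(f x - m)) * p x + Real.exp ((-1)*(f x - m)) * p x‖
    rw [Real.norm_eq_abs, Real.norm_eq_abs]
    exact habs' (f x - m) (p x) (hp0 x)
  have : (fun x => f x * p x) = fun x => (f x - m) * p x + m * p x :=
    funext fun x => by ring
  rw [this]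
  exact hdiff.add (hpInt.const_mul m)

theorem stmt13 {𝒲 𝒵 : Type*} [MeasurableSpace 𝒲] [MeasurableSpace 𝒵]
    (νW : Measure 𝒲) (νZ : Measure 𝒵) [SigmaFinite νW] [SigmaFinite νZ]
    (n : ℕ) (hn : 0 < n) (α : ℝ) (hα : α ∈ Set.Ioo (0:ℝ) 1)
    (σ : ℝ) (hσ : 0 ≤ σ)
    (j : Fin n → 𝒲 × 𝒵 → ℝ)
    (hjm : ∀ i, Measurable (j i)) (hj0 : ∀ i x, 0 ≤ j i x)
    (hj1 : ∀ i, ∫ x, j i x ∂(νW.prod νZ) = 1)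
    (pW : 𝒲 → ℝ) (μd νd : 𝒵 → ℝ)
    (hpWm : Measurable pW) (hpW0 : ∀ w, 0 ≤ pW w) (hpW1 : ∫ w, pW w ∂νW = 1)
    (hμm : Measurable μd) (hμ0 : ∀ z, 0 ≤ μd z) (hμ1 : ∫ z, μd z ∂νZ = 1)
    (hνm : Measurable νd) (hν0 : ∀ z, 0 ≤ νd z) (hν1 : ∫ z, νd z ∂νZ = 1)
    (hmargW : ∀ i, ∀ᵐ w ∂νW, ∫ z, j i (w, z) ∂νZ = pW w)
    (hmargZ : ∀ i, ∀ᵐ z ∂νZ, ∫ w, j i (w, z) ∂νW = μd z)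
    (ℓ : 𝒲 → 𝒵 → ℝ) (hlm : Measurable fun x : 𝒲 × 𝒵 => ℓ x.1 x.2)
    -- σ-sub-Gaussianity of the loss under the test/train mixture, for every w
    (hsubMix : ∀ w, SubGaussian νZ (fun z => α * μd z + (1 - α) * νd z) (ℓ w) σ)
    -- σ-sub-Gaussianity of the loss under the mixtures P_{W,Zᵢ}^{(α)}
    (hsubJ : ∀ i, SubGaussian (νW.prod νZ)
        (fun x => α * (pW x.1 * μd x.2) + (1 - α) * j i x)
        (fun x => ℓ x.1 x.2) σ)
    -- integrability of the loss and of all the KL integrands involved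
    (hintμ : ∀ w, Integrable (fun z => ℓ w z * μd z) νZ)
    (hintν : ∀ w, Integrable (fun z => ℓ w z * νd z) νZ)
    (hintprd : Integrable (fun x => ℓ x.1 x.2 * (pW x.1 * νd x.2)) (νW.prod νZ))
    (hintj : ∀ i, Integrable (fun x => ℓ x.1 x.2 * j i x) (νW.prod νZ))
    (hKL1 : Integrable
      (fun z => μd z * Real.log (μd z / (α * μd z + (1 - α) * νd z))) νZ)
    (hKL2 : Integrable
      (fun z => νd z * Real.log (νd z / (α * μd z + (1 - α) * νd z))) νZ)
    (hKL3 : ∀ i, Integrable (fun x => (pW x.1 * μd x.2) *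
      Real.log ((pW x.1 * μd x.2) / (α * (pW x.1 * μd x.2) + (1 - α) * j i x)))
      (νW.prod νZ))
    (hKL4 : ∀ i, Integrable (fun x => j i x *
      Real.log (j i x / (α * (pW x.1 * μd x.2) + (1 - α) * j i x)))
      (νW.prod νZ)) :
    -- the mismatch term bound, for any σ-sub-Gaussian f
    (∀ f : 𝒵 → ℝ, Measurable f →
        Integrable (fun z => f z * μd z) νZ →
        Integrable (fun z => f z * νd z) νZ →
        SubGaussian νZ (fun z => α * μd z + (1 - α) * νd z) f σ →
        |(∫ z, f z * νd z ∂νZ) - ∫ z, f z * μd z ∂νZ|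
          ≤ Real.sqrt (2 * σ ^ 2 *
              (α * KLd νZ μd (fun z => α * μd z + (1 - α) * νd z)
                + (1 - α) * KLd νZ νd (fun z => α * μd z + (1 - α) * νd z))
              / (α * (1 - α))))
    ∧ -- the mismatched generalization error bound
      |(1 / (n : ℝ)) * ∑ i : Fin n,
          ((∫ x, ℓ x.1 x.2 * (pW x.1 * νd x.2) ∂(νW.prod νZ))
            - ∫ x, ℓ x.1 x.2 * j i x ∂(νW.prod νZ))|
        ≤ Real.sqrt (2 * σ ^ 2 *
              (α * KLd νZ μd (fun z => α * μd z + (1 - α) * νd z)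
                + (1 - α) * KLd νZ νd (fun z => α * μd z + (1 - α) * νd z))
              / (α * (1 - α)))
          + (1 / (n : ℝ)) * ∑ i : Fin n, Real.sqrt (2 * σ ^ 2 *
              (α * KLd (νW.prod νZ) (fun x => pW x.1 * μd x.2)
                  (fun x => α * (pW x.1 * μd x.2) + (1 - α) * j i x)
                + (1 - α) * KLd (νW.prod νZ) (j i)
                  (fun x => α * (pW x.1 * μd x.2) + (1 - α) * j i x))
              / (α * (1 - α))) := by

  obtain ⟨hα0, hα1⟩ := hα
  have hα' : (0:ℝ) < 1 - α := by linarith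
  -- Part 1
  have part1 : ∀ f : 𝒵 → ℝ, Measurable f →
      Integrable (fun z => f z * μd z) νZ →
      Integrable (fun z => f z * νd z) νZ →
      SubGaussian νZ (fun z => α * μd z + (1 - α) * νd z) f σ →
      |(∫ z, f z * νd z ∂νZ) - ∫ z, f z * μd z ∂νZ|
        ≤ Real.sqrt (2 * σ ^ 2 *
            (α * KLd νZ μd (fun z => α * μd z + (1 - α) * νd z)
              + (1 - α) * KLd νZ νd (fun z => α * μd z + (1 - α) * νd z))
            / (α * (1 - α))) := by
    intro f hfm hfμ hfν hfsub
    exact mismatch hσ hα0 hα1 hμ0 hν0 hμ1 hν1 hfsub hfμ hfν hKL1 hKL2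
  refine ⟨part1, ?_⟩
  set R := Real.sqrt (2 * σ ^ 2 *
      (α * KLd νZ μd (fun z => α * μd z + (1 - α) * νd z)
        + (1 - α) * KLd νZ νd (fun z => α * μd z + (1 - α) * νd z))
      / (α * (1 - α))) with hR
  have hR0 : 0 ≤ R := Real.sqrt_nonneg _
  set S : Fin n → ℝ := fun i => Real.sqrt (2 * σ ^ 2 *
      (α * KLd (νW.prod νZ) (fun x => pW x.1 * μd x.2)
          (fun x => α * (pW x.1 * μd x.2) + (1 - α) * j i x)
        + (1 - α) * KLd (νW.prod νZ) (j i)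
          (fun x => α * (pW x.1 * μd x.2) + (1 - α) * j i x))
      / (α * (1 - α))) with hS
  -- basic integrabilities
  have hpWInt : Integrable pW νW := integ_one hpW1
  have hμInt : Integrable μd νZ := integ_one hμ1
  have hq1Int : Integrable (fun x : 𝒲 × 𝒵 => pW x.1 * μd x.2) (νW.prod νZ) :=
    hpWInt.mul_prod hμInt
  have hq11 : ∫ x : 𝒲 × 𝒵, pW x.1 * μd x.2 ∂(νW.prod νZ) = 1 := by
    rw [integral_prod_mul, hpW1, hμ1]; norm_num
  have hq10 : ∀ x : 𝒲 × 𝒵, 0 ≤ pW x.1 * μd x.2 :=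
    fun x => mul_nonneg (hpW0 _) (hμ0 _)
  -- derive joint integrability of ℓ · (pW·μd) from sub-Gaussianity under a mixture
  have i0 : Fin n := ⟨0, hn⟩
  have hji0Int : Integrable (j i0) (νW.prod νZ) := integ_one (hj1 i0)
  have hPInt : Integrable
      (fun x : 𝒲 × 𝒵 => α * (pW x.1 * μd x.2) + (1 - α) * j i0 x) (νW.prod νZ) :=
    (hq1Int.const_mul α).add (hji0Int.const_mul (1 - α))
  have hPm : Measurable
      (fun x : 𝒲 × 𝒵 => α * (pW x.1 * μd x.2) + (1 - α) * j i0 x) :=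
    (measurable_const.mul ((hpWm.comp measurable_fst).mul (hμm.comp measurable_snd))).add
      (measurable_const.mul (hjm i0))
  have hP0 : ∀ x : 𝒲 × 𝒵, 0 ≤ α * (pW x.1 * μd x.2) + (1 - α) * j i0 x :=
    fun x => add_nonneg (mul_nonneg hα0.le (hq10 x)) (mul_nonneg hα'.le (hj0 i0 x))
  have hlP : Integrable
      (fun x : 𝒲 × 𝒵 => ℓ x.1 x.2 * (α * (pW x.1 * μd x.2) + (1 - α) * j i0 x))
      (νW.prod νZ) := int_of_subG (hsubJ i0) hPInt hP0 hlm hPm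
  have hintprdμ : Integrable (fun x : 𝒲 × 𝒵 => ℓ x.1 x.2 * (pW x.1 * μd x.2))
      (νW.prod νZ) := by
    have heq : (fun x : 𝒲 × 𝒵 => ℓ x.1 x.2 * (pW x.1 * μd x.2))
        = fun x : 𝒲 × 𝒵 => (1 / α) *
            (ℓ x.1 x.2 * (α * (pW x.1 * μd x.2) + (1 - α) * j i0 x)
              - (1 - α) * (ℓ x.1 x.2 * j i0 x)) := by
      funext x; field_simp; ring
    rw [heq]
    exact ((hlP.sub ((hintj i0).const_mul (1 - α))).const_mul (1 / α))
  -- the per-i mismatch bound on the product space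
  have hterm : ∀ i : Fin n,
      |(∫ x, ℓ x.1 x.2 * j i x ∂(νW.prod νZ))
        - ∫ x, ℓ x.1 x.2 * (pW x.1 * μd x.2) ∂(νW.prod νZ)| ≤ S i := by
    intro i
    exact mismatch hσ hα0 hα1 hq10 (hj0 i) hq11 (hj1 i) (hsubJ i)
      hintprdμ (hintj i) (hKL3 i) (hKL4 i)
  -- Fubini for the train/test mismatch piece
  have hMν : Integrable (fun w => pW w * ∫ z, ℓ w z * νd z ∂νZ) νW := by
    refine (hintprd.integral_prod_left).congr (Filter.Eventually.of_forall fun w => ?_)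
    show (∫ z, ℓ w z * (pW w * νd z) ∂νZ) = pW w * ∫ z, ℓ w z * νd z ∂νZ
    rw [← integral_const_mul]
    congr 1; funext z; ring
  have hMμ : Integrable (fun w => pW w * ∫ z, ℓ w z * μd z ∂νZ) νW := by
    refine (hintprdμ.integral_prod_left).congr (Filter.Eventually.of_forall fun w => ?_)
    show (∫ z, ℓ w z * (pW w * μd z) ∂νZ) = pW w * ∫ z, ℓ w z * μd z ∂νZ
    rw [← integral_const_mul]
    congr 1; funext z; ring
  have hIν : ∫ x, ℓ x.1 x.2 * (pW x.1 * νd x.2) ∂(νW.prod νZ)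
      = ∫ w, pW w * ∫ z, ℓ w z * νd z ∂νZ ∂νW := by
    rw [integral_prod _ hintprd]
    refine integral_congr_ae (Filter.Eventually.of_forall fun w => ?_)
    show (∫ z, ℓ w z * (pW w * νd z) ∂νZ) = pW w * ∫ z, ℓ w z * νd z ∂νZ
    rw [← integral_const_mul]
    congr 1; funext z; ring
  have hIμ : ∫ x, ℓ x.1 x.2 * (pW x.1 * μd x.2) ∂(νW.prod νZ)
      = ∫ w, pW w * ∫ z, ℓ w z * μd z ∂νZ ∂νW := by
    rw [integral_prod _ hintprdμ]
    refine integral_congr_ae (Filter.Eventually.of_forall fun w => ?_)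
    show (∫ z, ℓ w z * (pW w * μd z) ∂νZ) = pW w * ∫ z, ℓ w z * μd z ∂νZ
    rw [← integral_const_mul]
    congr 1; funext z; ring
  have hbound : |(∫ x, ℓ x.1 x.2 * (pW x.1 * νd x.2) ∂(νW.prod νZ))
      - ∫ x, ℓ x.1 x.2 * (pW x.1 * μd x.2) ∂(νW.prod νZ)| ≤ R := by
    have hδ : ∀ w, |(∫ z, ℓ w z * νd z ∂νZ) - ∫ z, ℓ w z * μd z ∂νZ| ≤ R := by
      intro w
      exact part1 (ℓ w) (hlm.comp measurable_prodMk_left) (hintμ w) (hintν w)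
        (hsubMix w)
    have hdiff : (∫ x, ℓ x.1 x.2 * (pW x.1 * νd x.2) ∂(νW.prod νZ))
        - ∫ x, ℓ x.1 x.2 * (pW x.1 * μd x.2) ∂(νW.prod νZ)
        = ∫ w, pW w * ((∫ z, ℓ w z * νd z ∂νZ) - ∫ z, ℓ w z * μd z ∂νZ) ∂νW := by
      rw [hIν, hIμ, ← integral_sub hMν hMμ]
      congr 1; funext w; ring
    rw [hdiff]
    calc |∫ w, pW w * ((∫ z, ℓ w z * νd z ∂νZ) - ∫ z, ℓ w z * μd z ∂νZ) ∂νW|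
        ≤ ∫ w, |pW w * ((∫ z, ℓ w z * νd z ∂νZ) - ∫ z, ℓ w z * μd z ∂νZ)| ∂νW :=
          by simpa only [Real.norm_eq_abs] using
            norm_integral_le_integral_norm
              (fun w => pW w * ((∫ z, ℓ w z * νd z ∂νZ) - ∫ z, ℓ w z * μd z ∂νZ))
      _ ≤ ∫ w, pW w * R ∂νW := by
          refine integral_mono ((hMν.sub hMμ).congr
            (Filter.Eventually.of_forall fun w => by simp only [Pi.sub_apply]; ring)).abs
            (hpWInt.mul_const R) (fun w => ?_)
          rw [abs_mul, abs_of_nonneg (hpW0 w)]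
          exact mul_le_mul_of_nonneg_left (hδ w) (hpW0 w)
      _ = R := by rw [integral_mul_const, hpW1, one_mul]
  -- assemble
  have hi : ∀ i : Fin n,
      |(∫ x, ℓ x.1 x.2 * (pW x.1 * νd x.2) ∂(νW.prod νZ))
        - ∫ x, ℓ x.1 x.2 * j i x ∂(νW.prod νZ)| ≤ R + S i := by
    intro i
    have h1 := hbound
    have h2 := hterm i
    rw [abs_sub_comm] at h2
    calc |(∫ x, ℓ x.1 x.2 * (pW x.1 * νd x.2) ∂(νW.prod νZ))
          - ∫ x, ℓ x.1 x.2 * j i x ∂(νW.prod νZ)|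
        = |((∫ x, ℓ x.1 x.2 * (pW x.1 * νd x.2) ∂(νW.prod νZ))
            - ∫ x, ℓ x.1 x.2 * (pW x.1 * μd x.2) ∂(νW.prod νZ))
          + ((∫ x, ℓ x.1 x.2 * (pW x.1 * μd x.2) ∂(νW.prod νZ))
            - ∫ x, ℓ x.1 x.2 * j i x ∂(νW.prod νZ))| := by ring_nf
      _ ≤ _ + _ := abs_add_le _ _
      _ ≤ R + S i := add_le_add h1 h2
  have hnpos : (0:ℝ) < (n:ℝ) := by exact_mod_cast hn
  have hsum : |∑ i : Fin n, ((∫ x, ℓ x.1 x.2 * (pW x.1 * νd x.2) ∂(νW.prod νZ))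
      - ∫ x, ℓ x.1 x.2 * j i x ∂(νW.prod νZ))|
      ≤ (n:ℝ) * R + ∑ i : Fin n, S i := by
    calc |∑ i : Fin n, ((∫ x, ℓ x.1 x.2 * (pW x.1 * νd x.2) ∂(νW.prod νZ))
        - ∫ x, ℓ x.1 x.2 * j i x ∂(νW.prod νZ))|
        ≤ ∑ i : Fin n, |(∫ x, ℓ x.1 x.2 * (pW x.1 * νd x.2) ∂(νW.prod νZ))
            - ∫ x, ℓ x.1 x.2 * j i x ∂(νW.prod νZ)| := Finset.abs_sum_le_sum_abs _ _
      _ ≤ ∑ i : Fin n, (R + S i) := Finset.sum_le_sum fun i _ => hi i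
      _ = (n:ℝ) * R + ∑ i : Fin n, S i := by
          rw [Finset.sum_add_distrib, Finset.sum_const, Finset.card_univ, Fintype.card_fin,
            nsmul_eq_mul]
  calc |(1 / (n:ℝ)) * ∑ i : Fin n, ((∫ x, ℓ x.1 x.2 * (pW x.1 * νd x.2) ∂(νW.prod νZ))
      - ∫ x, ℓ x.1 x.2 * j i x ∂(νW.prod νZ))|
      = (1 / (n:ℝ)) * |∑ i : Fin n, ((∫ x, ℓ x.1 x.2 * (pW x.1 * νd x.2) ∂(νW.prod νZ))
        - ∫ x, ℓ x.1 x.2 * j i x ∂(νW.prod νZ))| := by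
        rw [abs_mul, abs_of_nonneg (by positivity : (0:ℝ) ≤ 1 / (n:ℝ))]
    _ ≤ (1 / (n:ℝ)) * ((n:ℝ) * R + ∑ i : Fin n, S i) :=
        mul_le_mul_of_nonneg_left hsum (by positivity)
    _ = R + (1 / (n:ℝ)) * ∑ i : Fin n, S i := by
        field_simp
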